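/- arXiv:1408.4710 — 2 statements merged into one kernel-verified Lean document; each statement's English description precedes it below -/
import Mathlib

section
/- Let S(A) = {a_n} be an independent Stanley sequence with k > κ(A), suppose a_{2^k − 1} ≥ λ(A) + ω(A), and let d be an integer with ω(A) < d ≤ a_{2^k} − λ(A). Set c = a_{2^k} and A* = {a_0, ..., a_{2^k − 1}}, and define J = (A* ∪ (A* + c)) ∪ ((A* + 7c − d) ∪ (A* + 8c − d)) ∪ ((A* + 10c − d) ∪ (A* + 11c − d)) ∪ ((A* + 17c − 2d) ∪ (A* + 18c − 2d)) ∪ ((A* + 30c − 3d) ∪ (A* + 31c − 3d)) ∪ ((A* + 37c − 4d) ∪ (A* + 38c − 4d)) ∪ ((A* + 40c − 4d) ∪ (A* + 41c − 4d)) ∪ ((A* + 47c − 5d) ∪ (A* + 48c − 5d)). Then the set J is 3-free. -/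
/-- A set of integers is 3-free if it contains no 3-term arithmetic progression. -/
def ThreeFreeSet (S : Set ℤ) : Prop :=
  ∀ x ∈ S, ∀ y ∈ S, ∀ z ∈ S, x < y → y < z → x + z ≠ 2 * y

/-- `a` is the Stanley sequence generated greedily from the finite 3-free set `A`
of nonnegative integers containing 0: `a` first enumerates `A` in increasing order,
and for `n ≥ |A|`, `a n` is the least integer exceeding `a (n-1)` keeping the
set of terms so far 3-free. -/
def IsStanleySeq (A : Finset ℤ) (a : ℕ → ℤ) : Prop :=
  (0 : ℤ) ∈ A ∧ (∀ x ∈ A, 0 ≤ x) ∧ ThreeFreeSet ↑A ∧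
  StrictMono a ∧ (∀ i < A.card, a i ∈ A) ∧
  ∀ n, A.card ≤ n →
    IsLeast {m : ℤ | a (n - 1) < m ∧ ThreeFreeSet (a '' Set.Iio n ∪ {m})} (a n)

/-- The two defining conditions of an independent Stanley sequence,
for a given λ and κ. -/
def IndepParams (a : ℕ → ℤ) (lam : ℤ) (κ : ℕ) : Prop :=
  ∀ k, κ ≤ k →
    (∀ i < 2 ^ k, a (2 ^ k + i) = a (2 ^ k) + a i) ∧
    a (2 ^ k) = 2 * a (2 ^ k - 1) + 1 - lam

/-- A Stanley sequence is independent if `IndepParams` holds for some λ and κ. -/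
def Independent (a : ℕ → ℤ) : Prop := ∃ lam κ, IndepParams a lam κ

/-- κ(A): the minimal κ witnessing independence. -/
noncomputable def kappa (a : ℕ → ℤ) : ℕ := sInf {κ | ∃ lam, IndepParams a lam κ}

/-- λ(A), recovered from the defining equation at k = κ(A). -/
noncomputable def lambdaA (a : ℕ → ℤ) : ℤ :=
  2 * a (2 ^ kappa a - 1) + 1 - a (2 ^ kappa a)

/-- The repeat factor ρ(A) = a_{2^{κ(A)}}. -/
noncomputable def rho (a : ℕ → ℤ) : ℤ := a (2 ^ kappa a)

/-- The scaling factor α(A), satisfying a_{2^k} = α·3^k for all k ≥ κ(A). -/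
noncomputable def scalingFactor (a : ℕ → ℤ) : ℚ :=
  (a (2 ^ kappa a) : ℚ) / 3 ^ kappa a

/-- An integer `x` is covered by a set `S` if there are `y < z < x` in `S`
with `y, z, x` in arithmetic progression. -/
def Covers (S : Set ℤ) (x : ℤ) : Prop :=
  ∃ y z, y ∈ S ∧ z ∈ S ∧ y < z ∧ z < x ∧ 2 * z = y + x

/-- An integer `x` is jointly covered by `S` and `T` if there are `y < z < x`
with `y ∈ S`, `z ∈ T`, and `y, z, x` in arithmetic progression. -/
def JointlyCovers (S T : Set ℤ) (x : ℤ) : Prop :=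
  ∃ y z, y ∈ S ∧ z ∈ T ∧ y < z ∧ z < x ∧ 2 * z = y + x

/-- O(A): nonnegative integers neither in the Stanley sequence nor covered by it. -/
def OSet (a : ℕ → ℤ) : Set ℤ :=
  {x | 0 ≤ x ∧ x ∉ Set.range a ∧ ¬ Covers (Set.range a) x}

/-- ω(A): the maximum element of O(A). -/
noncomputable def omegaA (a : ℕ → ℤ) : ℤ := sSup (OSet a)

/-- The translate `S + t` of a set of integers. -/
def shift (S : Set ℤ) (t : ℤ) : Set ℤ := (· + t) '' S

/-- A triadic number: a rational whose denominator in lowest terms is a power of 3. -/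
def IsTriadic (q : ℚ) : Prop := ∃ j : ℕ, q.den = 3 ^ j


/-! ### Auxiliary machinery for Statement 16 -/

def alphV : Fin 16 → ℤ := ![0,1,7,8,10,11,17,18,30,31,37,38,40,41,47,48]
def betV : Fin 16 → ℤ := ![0,0,1,1,1,1,2,2,3,3,4,4,4,4,5,5]
def blkV : Fin 16 → Fin 8 := ![0,0,1,1,2,2,3,3,4,4,5,5,6,6,7,7]
def abaseV : Fin 8 → ℤ := ![0,7,10,17,30,37,40,47]
def bbaseV : Fin 8 → ℤ := ![0,1,1,2,3,4,4,5]

def SafePQ (p q : ℤ) : Prop :=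
  (q = 0 ∧ (2 ≤ p ∨ p ≤ -2)) ∨ (1 ≤ q ∧ q + 1 ≤ p) ∨ (q ≤ -1 ∧ p ≤ q - 1) ∨
  (1 ≤ q ∧ p ≤ -2) ∨ (q ≤ -1 ∧ 2 ≤ p)

instance : ∀ p q, Decidable (SafePQ p q) := fun p q => by unfold SafePQ; infer_instance

theorem base_epsV : ∀ i : Fin 16, betV i = bbaseV (blkV i) ∧
    (alphV i = abaseV (blkV i) ∨ alphV i = abaseV (blkV i) + 1) := by decide

theorem classifyV : ∀ i j k : Fin 16,
    (blkV i = blkV j ∧ blkV j = blkV k) ∨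
    ((2 * betV j - betV i - betV k = 0) ∧
      (2 * alphV j - alphV i - alphV k = 1 ∨ 2 * alphV j - alphV i - alphV k = -1)) ∨
    SafePQ (2 * alphV j - alphV i - alphV k) (2 * betV j - betV i - betV k) := by decide

theorem safe_big (p q c lam d : ℤ) (h : SafePQ p q) (h0 : 0 ≤ lam) (h1 : lam ≤ c - 1)
    (h2 : 1 ≤ d) (h3 : d ≤ c - lam) :
    c + lam ≤ p * c - q * d ∨ p * c - q * d ≤ -(c + lam) := by
  have hc0 : (1:ℤ) ≤ c := by linarith
  rcases h with ⟨hq, hp | hp⟩ | ⟨hq, hp⟩ | ⟨hq, hp⟩ | ⟨hq, hp⟩ | ⟨hq, hp⟩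
  · left; subst hq
    nlinarith [mul_nonneg (by linarith : (0:ℤ) ≤ p - 2) (by linarith : (0:ℤ) ≤ c)]
  · right; subst hq
    nlinarith [mul_nonneg (by linarith : (0:ℤ) ≤ -p - 2) (by linarith : (0:ℤ) ≤ c)]
  · left
    nlinarith [mul_nonneg (by linarith : (0:ℤ) ≤ q - 1) h0,
      mul_nonneg (by linarith : (0:ℤ) ≤ q) (by linarith : (0:ℤ) ≤ c - lam - d),
      mul_nonneg (by linarith : (0:ℤ) ≤ p - q - 1) (by linarith : (0:ℤ) ≤ c)]
  · right
    nlinarith [mul_nonneg (by linarith : (0:ℤ) ≤ -q - 1) h0,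
      mul_nonneg (by linarith : (0:ℤ) ≤ -q) (by linarith : (0:ℤ) ≤ c - lam - d),
      mul_nonneg (by linarith : (0:ℤ) ≤ -p + q - 1) (by linarith : (0:ℤ) ≤ c)]
  · right
    nlinarith [mul_nonneg (by linarith : (0:ℤ) ≤ q - 1) (by linarith : (0:ℤ) ≤ d),
      mul_nonneg (by linarith : (0:ℤ) ≤ -p - 2) (by linarith : (0:ℤ) ≤ c)]
  · left
    nlinarith [mul_nonneg (by linarith : (0:ℤ) ≤ -q - 1) (by linarith : (0:ℤ) ≤ d),
      mul_nonneg (by linarith : (0:ℤ) ≤ p - 2) (by linarith : (0:ℤ) ≤ c)]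

/-- the set J built from sixteen translates of A* is 3-free. -/
theorem construction_J_is_three_free (A : Finset ℤ) (a : ℕ → ℤ)
    (hA : IsStanleySeq A a) (hInd : Independent a) (k : ℕ) (hk : kappa a < k)
    (hbound : lambdaA a + omegaA a ≤ a (2 ^ k - 1))
    (d : ℤ) (hd1 : omegaA a < d) (hd2 : d ≤ a (2 ^ k) - lambdaA a)
    (c : ℤ) (hc : c = a (2 ^ k))
    (Ast : Set ℤ) (hAst : Ast = a '' Set.Iio (2 ^ k))
    (J : Set ℤ)
    (hJ : J = (Ast ∪ shift Ast c) ∪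
        (shift Ast (7 * c - d) ∪ shift Ast (8 * c - d)) ∪
        (shift Ast (10 * c - d) ∪ shift Ast (11 * c - d)) ∪
        (shift Ast (17 * c - 2 * d) ∪ shift Ast (18 * c - 2 * d)) ∪
        (shift Ast (30 * c - 3 * d) ∪ shift Ast (31 * c - 3 * d)) ∪
        (shift Ast (37 * c - 4 * d) ∪ shift Ast (38 * c - 4 * d)) ∪
        (shift Ast (40 * c - 4 * d) ∪ shift Ast (41 * c - 4 * d)) ∪
        (shift Ast (47 * c - 5 * d) ∪ shift Ast (48 * c - 5 * d))) :
    ThreeFreeSet J := by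
  obtain ⟨hA0, hApos, hA3, hmono, hAmem, hgreedy⟩ := hA
  have hcardpos : 0 < A.card := Finset.card_pos.mpr ⟨0, hA0⟩
  have hpos : ∀ n, 0 ≤ a n := by
    intro n
    exact le_trans (hApos _ (hAmem 0 hcardpos)) (hmono.monotone (Nat.zero_le n))
  -- every prefix of the sequence is 3-free
  have h3f : ∀ n : ℕ, ThreeFreeSet (a '' Set.Iio n) := by
    intro n
    rcases le_or_gt n A.card with h | h
    · intro x hx y hy z hz h1 h2
      obtain ⟨i, hi, rfl⟩ := hx; obtain ⟨j, hj, rfl⟩ := hy; obtain ⟨l, hl, rfl⟩ := hz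
      have hi' := Set.mem_Iio.mp hi; have hj' := Set.mem_Iio.mp hj
      have hl' := Set.mem_Iio.mp hl
      exact hA3 _ (hAmem i (by omega)) _ (hAmem j (by omega)) _ (hAmem l (by omega)) h1 h2
    · obtain ⟨m, rfl⟩ : ∃ m, n = m + 1 := ⟨n - 1, by omega⟩
      have hle := (hgreedy m (by omega)).1.2
      have himg : a '' Set.Iio (m + 1) = a '' Set.Iio m ∪ {a m} := by
        rw [Set.union_singleton,
          show Set.Iio (m + 1) = insert m (Set.Iio m) by
            ext x; simp only [Set.mem_Iio, Set.mem_insert_iff]; omega,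
          Set.image_insert_eq]
      rw [himg]; exact hle
  -- independence parameters
  obtain ⟨lam, hlam⟩ : ∃ lam, IndepParams a lam (kappa a) := by
    obtain ⟨lam0, κ0, h0⟩ := hInd
    exact Nat.sInf_mem (⟨κ0, lam0, h0⟩ : {κ | ∃ lam, IndepParams a lam κ}.Nonempty)
  have hlamEq : lambdaA a = lam := by
    have h2 := (hlam (kappa a) le_rfl).2
    unfold lambdaA; linarith
  have hκk : kappa a ≤ k := hk.le
  have hck : c = 2 * a (2 ^ k - 1) + 1 - lambdaA a := by
    rw [hc, hlamEq, (hlam k hκk).2]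
  -- lambda is nonnegative
  have hlam0 : 0 ≤ lambdaA a := by
    rw [hlamEq]
    set k' := kappa a + A.card with hk'
    have hcard : A.card ≤ 2 ^ k' := by
      have h1 := Nat.lt_two_pow_self (n := k')
      omega
    have hleast := hgreedy (2 ^ k') hcard
    have hmem : (2 * a (2 ^ k' - 1) + 1) ∈
        {m : ℤ | a (2 ^ k' - 1) < m ∧ ThreeFreeSet (a '' Set.Iio (2 ^ k') ∪ {m})} := by
      constructor
      · have := hpos (2 ^ k' - 1); linarith
      · intro x hx y hy z hz h1 h2 heq
        have hbnd : ∀ w ∈ a '' Set.Iio (2 ^ k'), w ≤ a (2 ^ k' - 1) := by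
          rintro w ⟨i, hi, rfl⟩
          have := Set.mem_Iio.mp hi
          exact hmono.monotone (by omega)
        rcases hz with hz | hz
        · have hx' : x ∈ a '' Set.Iio (2 ^ k') := by
            rcases hx with hx | hx
            · exact hx
            · exfalso; rw [Set.mem_singleton_iff] at hx
              have h3 := hbnd z hz; have h4 := hpos (2 ^ k' - 1); linarith
          have hy' : y ∈ a '' Set.Iio (2 ^ k') := by
            rcases hy with hy | hy
            · exact hy
            · exfalso; rw [Set.mem_singleton_iff] at hy
              have h3 := hbnd z hz; have h4 := hpos (2 ^ k' - 1); linarith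
          exact h3f _ x hx' y hy' z hz h1 h2 heq
        · rw [Set.mem_singleton_iff] at hz; subst hz
          have hy' : y ∈ a '' Set.Iio (2 ^ k') := by
            rcases hy with hy | hy
            · exact hy
            · exfalso; rw [Set.mem_singleton_iff] at hy
              rw [hy] at h2; exact lt_irrefl _ h2
          have hx' : x ∈ a '' Set.Iio (2 ^ k') := by
            rcases hx with hx | hx
            · exact hx
            · exfalso; rw [Set.mem_singleton_iff] at hx; linarith
          obtain ⟨j, hj, rfl⟩ := hy'
          obtain ⟨i, hi, rfl⟩ := hx'
          have h1' := hpos i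
          have h2' := hbnd _ ⟨j, hj, rfl⟩
          linarith
    have hub := hleast.2 hmem
    have heqk := (hlam k' (Nat.le_add_right _ _)).2
    linarith
  have hMpos : 0 ≤ a (2 ^ k - 1) := hpos _
  have hMc : a (2 ^ k - 1) < c := by
    rw [hc]
    exact hmono (by have : 0 < 2 ^ k := Nat.pow_pos (by norm_num); omega)
  have hlamM : lambdaA a ≤ a (2 ^ k - 1) := by linarith
  -- omega is nonnegative, hence d ≥ 1
  have homega0 : 0 ≤ omegaA a := by
    unfold omegaA
    rcases Set.eq_empty_or_nonempty (OSet a) with he | hne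
    · rw [he, Int.csSup_empty]
    · by_cases hbdd : BddAbove (OSet a)
      · exact (Int.csSup_mem hne hbdd).1
      · rw [Int.csSup_of_not_bddAbove hbdd]
  have hd1' : (1:ℤ) ≤ d := by
    have : (0:ℤ) < d := lt_of_le_of_lt homega0 hd1
    omega
  have hd2' : d ≤ c - lambdaA a := by rw [hc]; exact hd2
  -- the doubled prefix T and membership facts
  have hT3 : ThreeFreeSet (a '' Set.Iio (2 ^ (k + 1))) := h3f _
  have hsub1 : ∀ m : ℕ, m < 2 ^ k → a m ∈ a '' Set.Iio (2 ^ (k + 1)) := by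
    intro m hm
    refine ⟨m, Set.mem_Iio.mpr ?_, rfl⟩
    have : 2 ^ k ≤ 2 ^ (k + 1) := Nat.pow_le_pow_right (by norm_num) (Nat.le_succ k)
    omega
  have hshiftc : ∀ m : ℕ, m < 2 ^ k → a m + c ∈ a '' Set.Iio (2 ^ (k + 1)) := by
    intro m hm
    have h1 := (hlam k hκk).1 m hm
    refine ⟨2 ^ k + m, Set.mem_Iio.mpr ?_, ?_⟩
    · have : 2 ^ (k + 1) = 2 ^ k + 2 ^ k := by rw [pow_succ]; ring
      omega
    · rw [h1, hc]; ring
  have hbndM : ∀ m : ℕ, m < 2 ^ k → a m ≤ a (2 ^ k - 1) := by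
    intro m hm
    exact hmono.monotone (by omega)
  -- membership decomposition for J
  have hext : ∀ (t x : ℤ), x ∈ shift Ast t → ∃ m : ℕ, m < 2 ^ k ∧ x = a m + t := by
    intro t x hx
    obtain ⟨u, hu, rfl⟩ := hx
    rw [hAst] at hu
    obtain ⟨m, hm, rfl⟩ := hu
    exact ⟨m, Set.mem_Iio.mp hm, rfl⟩
  have hmemJ : ∀ x ∈ J, ∃ (i : Fin 16) (m : ℕ), m < 2 ^ k ∧
      x = a m + (alphV i * c - betV i * d) := by
    intro x hx
    rw [hJ] at hx
    simp only [Set.mem_union] at hx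
    rcases hx with (((((((h | h) | (h | h)) | (h | h)) | (h | h)) | (h | h)) | (h | h)) |
      (h | h)) | (h | h)
    · rw [hAst] at h
      obtain ⟨m, hm, rfl⟩ := h
      exact ⟨0, m, Set.mem_Iio.mp hm, by
        rw [show alphV 0 = 0 from by decide, show betV 0 = 0 from by decide] <;> ring⟩
    · obtain ⟨m, hm, he⟩ := hext _ _ h
      exact ⟨1, m, hm, by
        rw [he, show alphV 1 = 1 from by decide, show betV 1 = 0 from by decide] <;> ring⟩
    · obtain ⟨m, hm, he⟩ := hext _ _ h
      exact ⟨2, m, hm, by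
        rw [he, show alphV 2 = 7 from by decide, show betV 2 = 1 from by decide] <;> ring⟩
    · obtain ⟨m, hm, he⟩ := hext _ _ h
      exact ⟨3, m, hm, by
        rw [he, show alphV 3 = 8 from by decide, show betV 3 = 1 from by decide] <;> ring⟩
    · obtain ⟨m, hm, he⟩ := hext _ _ h
      exact ⟨4, m, hm, by
        rw [he, show alphV 4 = 10 from by decide, show betV 4 = 1 from by decide] <;> ring⟩
    · obtain ⟨m, hm, he⟩ := hext _ _ h
      exact ⟨5, m, hm, by
        rw [he, show alphV 5 = 11 from by decide, show betV 5 = 1 from by decide] <;> ring⟩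
    · obtain ⟨m, hm, he⟩ := hext _ _ h
      exact ⟨6, m, hm, by
        rw [he, show alphV 6 = 17 from by decide, show betV 6 = 2 from by decide] <;> ring⟩
    · obtain ⟨m, hm, he⟩ := hext _ _ h
      exact ⟨7, m, hm, by
        rw [he, show alphV 7 = 18 from by decide, show betV 7 = 2 from by decide] <;> ring⟩
    · obtain ⟨m, hm, he⟩ := hext _ _ h
      exact ⟨8, m, hm, by
        rw [he, show alphV 8 = 30 from by decide, show betV 8 = 3 from by decide] <;> ring⟩
    · obtain ⟨m, hm, he⟩ := hext _ _ h
      exact ⟨9, m, hm, by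
        rw [he, show alphV 9 = 31 from by decide, show betV 9 = 3 from by decide] <;> ring⟩
    · obtain ⟨m, hm, he⟩ := hext _ _ h
      exact ⟨10, m, hm, by
        rw [he, show alphV 10 = 37 from by decide, show betV 10 = 4 from by decide] <;> ring⟩
    · obtain ⟨m, hm, he⟩ := hext _ _ h
      exact ⟨11, m, hm, by
        rw [he, show alphV 11 = 38 from by decide, show betV 11 = 4 from by decide] <;> ring⟩
    · obtain ⟨m, hm, he⟩ := hext _ _ h
      exact ⟨12, m, hm, by
        rw [he, show alphV 12 = 40 from by decide, show betV 12 = 4 from by decide] <;> ring⟩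
    · obtain ⟨m, hm, he⟩ := hext _ _ h
      exact ⟨13, m, hm, by
        rw [he, show alphV 13 = 41 from by decide, show betV 13 = 4 from by decide] <;> ring⟩
    · obtain ⟨m, hm, he⟩ := hext _ _ h
      exact ⟨14, m, hm, by
        rw [he, show alphV 14 = 47 from by decide, show betV 14 = 5 from by decide] <;> ring⟩
    · obtain ⟨m, hm, he⟩ := hext _ _ h
      exact ⟨15, m, hm, by
        rw [he, show alphV 15 = 48 from by decide, show betV 15 = 5 from by decide] <;> ring⟩
  -- main argument
  intro x hx y hy z hz hxy hyz heq
  obtain ⟨i1, m1, hm1, hx1⟩ := hmemJ x hx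
  obtain ⟨i2, m2, hm2, hy1⟩ := hmemJ y hy
  obtain ⟨i3, m3, hm3, hz1⟩ := hmemJ z hz
  have hu0 := hpos m1; have hv0 := hpos m2; have hw0 := hpos m3
  have huM := hbndM m1 hm1; have hvM := hbndM m2 hm2; have hwM := hbndM m3 hm3
  have heq2 : a m1 + a m3 - 2 * a m2 =
      (2 * alphV i2 - alphV i1 - alphV i3) * c - (2 * betV i2 - betV i1 - betV i3) * d := by
    rw [hx1, hy1, hz1] at heq
    linear_combination heq
  rcases classifyV i1 i2 i3 with ⟨hb1, hb2⟩ | ⟨hq0, hp1 | hp1⟩ | hsafe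
  · -- all three offsets come from the same block
    obtain ⟨hbe1, hal1⟩ := base_epsV i1
    obtain ⟨hbe2, hal2⟩ := base_epsV i2
    obtain ⟨hbe3, hal3⟩ := base_epsV i3
    rw [hb1] at hbe1 hal1
    rw [← hb2] at hbe3 hal3
    have hx2 : ∃ u', u' ∈ a '' Set.Iio (2 ^ (k + 1)) ∧
        x = u' + (abaseV (blkV i2) * c - bbaseV (blkV i2) * d) := by
      rcases hal1 with h | h
      · exact ⟨a m1, hsub1 m1 hm1, by rw [hx1, h, hbe1]⟩
      · exact ⟨a m1 + c, hshiftc m1 hm1, by rw [hx1, h, hbe1]; ring⟩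
    have hy2 : ∃ v', v' ∈ a '' Set.Iio (2 ^ (k + 1)) ∧
        y = v' + (abaseV (blkV i2) * c - bbaseV (blkV i2) * d) := by
      rcases hal2 with h | h
      · exact ⟨a m2, hsub1 m2 hm2, by rw [hy1, h, hbe2]⟩
      · exact ⟨a m2 + c, hshiftc m2 hm2, by rw [hy1, h, hbe2]; ring⟩
    have hz2 : ∃ w', w' ∈ a '' Set.Iio (2 ^ (k + 1)) ∧
        z = w' + (abaseV (blkV i2) * c - bbaseV (blkV i2) * d) := by
      rcases hal3 with h | h
      · exact ⟨a m3, hsub1 m3 hm3, by rw [hz1, h, hbe3]⟩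
      · exact ⟨a m3 + c, hshiftc m3 hm3, by rw [hz1, h, hbe3]; ring⟩
    obtain ⟨u', hu'T, hxu⟩ := hx2
    obtain ⟨v', hv'T, hyv⟩ := hy2
    obtain ⟨w', hw'T, hzw⟩ := hz2
    rw [hxu, hyv] at hxy
    rw [hyv, hzw] at hyz
    rw [hxu, hyv, hzw] at heq
    exact hT3 u' hu'T v' hv'T w' hw'T (by linarith) (by linarith) (by linarith)
  · -- difference pattern  c
    have heq3 : a m1 + a m3 - 2 * a m2 = c := by
      rw [hp1, hq0] at heq2; linarith
    exact hT3 (a m1) (hsub1 m1 hm1) (a m2 + c) (hshiftc m2 hm2) (a m3 + c) (hshiftc m3 hm3)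
      (by linarith) (by linarith) (by linarith)
  · -- difference pattern  -c
    have heq3 : a m1 + a m3 - 2 * a m2 = -c := by
      rw [hp1, hq0] at heq2; linarith
    exact hT3 (a m1) (hsub1 m1 hm1) (a m2) (hsub1 m2 hm2) (a m3 + c) (hshiftc m3 hm3)
      (by linarith) (by linarith) (by linarith)
  · -- safe case: the offset combination is numerically too large
    have hlc : lambdaA a ≤ c - 1 := by linarith
    rcases safe_big _ _ c (lambdaA a) d hsafe hlam0 hlc hd1' hd2' with h | h
    · linarith
    · linarith
end

section
/- Suppose S(A) = {a_n} and S(B) are independent Stanley sequences with scaling factors α(A) and α(B), and k ≥ κ(A). Let A* = {a_0, a_1, ..., a_{2^k − 1}} and A ⊗_k B = {a_{2^k}·b + a : a ∈ A*, b ∈ B}. Then the scaling factor of the independent Stanley sequence S(A ⊗_k B) equals the product α(A)·α(B). -/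
section StanleyBasic

variable {A : Finset ℤ} {a : ℕ → ℤ}

lemma ThreeFreeSet.mono {S T : Set ℤ} (h : ThreeFreeSet T) (hsub : S ⊆ T) :
    ThreeFreeSet S := fun x hx y hy z hz h1 h2 => h x (hsub hx) y (hsub hy) z (hsub hz) h1 h2

lemma IsStanleySeq.sm (h : IsStanleySeq A a) : StrictMono a := h.2.2.2.1

lemma IsStanleySeq.card_pos (h : IsStanleySeq A a) : 0 < A.card :=
  Finset.card_pos.2 ⟨0, h.1⟩

lemma IsStanleySeq.mem_seed (h : IsStanleySeq A a) : ∀ i < A.card, a i ∈ A := h.2.2.2.2.1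

lemma IsStanleySeq.isLeast (h : IsStanleySeq A a) :
    ∀ n, A.card ≤ n →
      IsLeast {m : ℤ | a (n - 1) < m ∧ ThreeFreeSet (a '' Set.Iio n ∪ {m})} (a n) :=
  h.2.2.2.2.2

lemma image_Iio_succ (a : ℕ → ℤ) (n : ℕ) :
    a '' Set.Iio (n + 1) = a '' Set.Iio n ∪ {a n} := by
  ext x
  simp only [Set.mem_image, Set.mem_union, Set.mem_singleton_iff, Set.mem_Iio]
  constructor
  · rintro ⟨i, hi, rfl⟩
    rcases Nat.lt_succ_iff_lt_or_eq.1 hi with h | rfl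
    · exact Or.inl ⟨i, h, rfl⟩
    · exact Or.inr rfl
  · rintro (⟨i, hi, rfl⟩ | rfl)
    · exact ⟨i, Nat.lt_succ_of_lt hi, rfl⟩
    · exact ⟨n, Nat.lt_succ_self n, rfl⟩

lemma IsStanleySeq.prefix_threeFree (h : IsStanleySeq A a) (n : ℕ) :
    ThreeFreeSet (a '' Set.Iio n) := by
  induction n with
  | zero => intro x hx; simp at hx
  | succ n ih =>
    rcases le_or_gt (A.card) n with hn | hn
    · exact (h.isLeast n hn).1.2.mono (by rw [image_Iio_succ])
    · refine h.2.2.1.mono ?_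
      rintro x ⟨i, hi, rfl⟩
      exact h.mem_seed i (lt_of_lt_of_le hi hn)

lemma IsStanleySeq.range_threeFree (h : IsStanleySeq A a) :
    ThreeFreeSet (Set.range a) := by
  intro x hx y hy z hz h1 h2
  obtain ⟨i, rfl⟩ := hx
  obtain ⟨j, rfl⟩ := hy
  obtain ⟨l, rfl⟩ := hz
  refine h.prefix_threeFree (max (max i j) l + 1) _ ⟨i, ?_, rfl⟩ _ ⟨j, ?_, rfl⟩ _ ⟨l, ?_, rfl⟩ h1 h2 <;>
    · simp only [Set.mem_Iio, Nat.lt_succ_iff]; omega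

lemma IsStanleySeq.image_seed (h : IsStanleySeq A a) :
    (Finset.range A.card).image a = A := by
  apply Finset.eq_of_subset_of_card_le
  · intro x hx
    obtain ⟨i, hi, rfl⟩ := Finset.mem_image.1 hx
    exact h.mem_seed i (Finset.mem_range.1 hi)
  · rw [Finset.card_image_of_injective _ h.sm.injective, Finset.card_range]

lemma IsStanleySeq.apply_zero (h : IsStanleySeq A a) : a 0 = 0 := by
  have h0 : (0 : ℤ) ∈ (Finset.range A.card).image a := h.image_seed.symm ▸ h.1
  obtain ⟨i, hi, hia⟩ := Finset.mem_image.1 h0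
  have h1 : a 0 ≤ a i := h.sm.monotone (Nat.zero_le i)
  have h2 : 0 ≤ a 0 := h.2.1 _ (h.mem_seed 0 h.card_pos)
  omega

lemma IsStanleySeq.nonneg (h : IsStanleySeq A a) (n : ℕ) : 0 ≤ a n := by
  have := h.sm.monotone (Nat.zero_le n); rw [h.apply_zero] at this; exact this

lemma IsStanleySeq.le_max (h : IsStanleySeq A a) {x : ℤ} (hx : x ∈ A) :
    x ≤ a (A.card - 1) := by
  obtain ⟨i, hi, rfl⟩ := Finset.mem_image.1 (h.image_seed.symm ▸ hx)
  have hi' := Finset.mem_range.1 hi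
  exact h.sm.monotone (by omega : i ≤ A.card - 1)

lemma IsStanleySeq.le_apply (h : IsStanleySeq A a) (n : ℕ) : (n : ℤ) ≤ a n := by
  induction n with
  | zero => simp [h.apply_zero]
  | succ n ih =>
    have h2 : a n < a (n + 1) := h.sm (by omega : n < n + 1)
    push_cast; omega

/-- Greedy coverage: any integer above the seed maximum and not in the sequence
is covered by two earlier terms. -/
lemma IsStanleySeq.cover (h : IsStanleySeq A a) {x : ℤ}
    (hx : x ∉ Set.range a) (hbig : a (A.card - 1) < x) :
    ∃ p q : ℕ, a p < a q ∧ a q < x ∧ a p + x = 2 * a q := by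
  classical
  have hex : ∃ n, x < a n := ⟨(x.toNat + 1), by
    have h1 := h.le_apply (x.toNat + 1)
    have h2 : (x.toNat : ℤ) + 1 ≤ a (x.toNat + 1) := by push_cast at h1 ⊢; omega
    omega⟩
  obtain ⟨n, hxn, hmin⟩ : ∃ n, x < a n ∧ ∀ m, m < n → a m ≤ x :=
    ⟨Nat.find hex, Nat.find_spec hex, fun m hm => le_of_not_gt (Nat.find_min hex hm)⟩
  have hcard : A.card ≤ n := by
    by_contra hc
    push_neg at hc
    have : a n ≤ a (A.card - 1) := h.sm.monotone (by omega)
    omega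
  have hn0 : n ≠ 0 := by
    rintro rfl
    have h0 : a 0 ≤ a (A.card - 1) := h.sm.monotone (Nat.zero_le _)
    omega
  have hn1 : a (n - 1) < x := by
    have hle : a (n - 1) ≤ x := hmin (n - 1) (by omega)
    rcases lt_or_eq_of_le hle with h' | h'
    · exact h'
    · exact absurd ⟨n - 1, h'⟩ hx
  have hL := h.isLeast n hcard
  have hxnot : x ∉ {m : ℤ | a (n - 1) < m ∧ ThreeFreeSet (a '' Set.Iio n ∪ {m})} := by
    intro hmem
    exact absurd (hL.2 hmem) (not_le.2 hxn)
  have hnTF : ¬ ThreeFreeSet (a '' Set.Iio n ∪ {x}) := by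
    intro hTF; exact hxnot ⟨hn1, hTF⟩
  unfold ThreeFreeSet at hnTF
  push_neg at hnTF
  obtain ⟨x₁, hx₁, x₂, hx₂, x₃, hx₃, h12, h23, heq⟩ := hnTF
  -- all prefix elements are < x
  have hpre : ∀ w ∈ a '' Set.Iio n, w < x := by
    rintro w ⟨i, hi, rfl⟩
    rcases lt_or_eq_of_le (hmin i hi) with h' | h'
    · exact h'
    · exact absurd ⟨i, h'⟩ hx
  have hx₃x : x₃ = x := by
    rcases hx₃ with h₃ | h₃
    · exfalso
      have h1' : x₁ ∈ a '' Set.Iio n := by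
        rcases hx₁ with h' | h'
        · exact h'
        · exfalso; rw [Set.mem_singleton_iff.1 h'] at h12
          exact absurd (h12.trans (h23.trans (hpre _ h₃))) (lt_irrefl x)
      have h2' : x₂ ∈ a '' Set.Iio n := by
        rcases hx₂ with h' | h'
        · exact h'
        · exfalso; rw [Set.mem_singleton_iff.1 h'] at h23
          exact absurd (h23.trans (hpre _ h₃)) (lt_irrefl x)
      exact h.prefix_threeFree n _ h1' _ h2' _ h₃ h12 h23 heq
    · exact h₃
  rw [hx₃x] at h23 heq
  have h1' : x₁ ∈ a '' Set.Iio n := by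
    rcases hx₁ with h' | h'
    · exact h'
    · exfalso; rw [Set.mem_singleton_iff.1 h'] at h12
      exact absurd (h12.trans h23) (lt_irrefl x)
  have h2' : x₂ ∈ a '' Set.Iio n := by
    rcases hx₂ with h' | h'
    · exact h'
    · exfalso; rw [Set.mem_singleton_iff.1 h'] at h23; exact absurd h23 (lt_irrefl x)
  obtain ⟨p, hp, rfl⟩ := h1'
  obtain ⟨q, hq, rfl⟩ := h2'
  exact ⟨p, q, h12, h23, by omega⟩

end StanleyBasic
section IndepLemmas

variable {A : Finset ℤ} {a : ℕ → ℤ} {lam : ℤ} {κ : ℕ}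

lemma IndepParams.block (hP : IndepParams a lam κ) {K i : ℕ} (hK : κ ≤ K) (hi : i < 2 ^ K) :
    a (2 ^ K + i) = a (2 ^ K) + a i := (hP K hK).1 i hi

lemma IndepParams.lam_eq (hP : IndepParams a lam κ) {K : ℕ} (hK : κ ≤ K) :
    a (2 ^ K) = 2 * a (2 ^ K - 1) + 1 - lam := (hP K hK).2

lemma IndepParams.pow (hP : IndepParams a lam κ) {K : ℕ} (hK : κ ≤ K) (t : ℕ) :
    a (2 ^ (K + t)) = 3 ^ t * a (2 ^ K) := by
  induction t with
  | zero => simp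
  | succ t ih =>
    have h2p : 1 ≤ 2 ^ (K + t) := Nat.one_le_two_pow
    have hps : 2 ^ (K + t + 1) = 2 ^ (K + t) * 2 := pow_succ 2 (K + t)
    have hidx : 2 ^ (K + t + 1) - 1 = 2 ^ (K + t) + (2 ^ (K + t) - 1) := by omega
    have h1 : a (2 ^ (K + t + 1) - 1) = a (2 ^ (K + t)) + a (2 ^ (K + t) - 1) := by
      rw [hidx]; exact hP.block (by omega) (by omega)
    have h2 := hP.lam_eq (K := K + t + 1) (by omega)
    have h3 := hP.lam_eq (K := K + t) (by omega)
    have : a (2 ^ (K + t + 1)) = 3 * a (2 ^ (K + t)) := by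
      rw [h2, h1]; omega
    rw [show K + (t + 1) = K + t + 1 by ring, this, ih]; ring

lemma IndepParams.decomp (hP : IndepParams a lam κ) {k : ℕ} (hκk : κ ≤ k) :
    ∀ t : ℕ, ∀ n, n < 2 ^ (k + t) →
      ∃ e : ℤ, ∃ i : ℕ, i < 2 ^ k ∧ 0 ≤ e ∧ 2 * e ≤ 3 ^ t - 1 ∧ a n = a (2 ^ k) * e + a i := by
  intro t
  induction t with
  | zero => intro n hn; exact ⟨0, n, by simpa using hn, le_refl 0, by norm_num, by ring_nf⟩
  | succ t ih =>
    intro n hn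
    have h3t : (1 : ℤ) ≤ 3 ^ t := one_le_pow₀ (by norm_num)
    have h3ts : (3 : ℤ) ^ (t + 1) = 3 * 3 ^ t := by ring
    by_cases hc : n < 2 ^ (k + t)
    · obtain ⟨e, i, hi, he0, hebd, heq⟩ := ih n hc
      exact ⟨e, i, hi, he0, by linarith, heq⟩
    · push_neg at hc
      have hps : 2 ^ (k + t + 1) = 2 ^ (k + t) * 2 := pow_succ 2 (k + t)
      have hi' : n - 2 ^ (k + t) < 2 ^ (k + t) := by
        rw [show k + (t + 1) = k + t + 1 by ring] at hn; omega
      obtain ⟨e, i, hi, he0, hebd, heq⟩ := ih (n - 2 ^ (k + t)) hi'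
      have hblock : a n = a (2 ^ (k + t)) + a (n - 2 ^ (k + t)) := by
        have hb := hP.block (K := k + t) (i := n - 2 ^ (k + t)) (by omega) hi'
        rw [show 2 ^ (k + t) + (n - 2 ^ (k + t)) = n from by omega] at hb
        exact hb
      refine ⟨3 ^ t + e, i, hi, by positivity, by linarith, ?_⟩
      rw [hblock, hP.pow hκk t, heq]; ring

lemma IsStanleySeq.pos_of_pos (h : IsStanleySeq A a) {n : ℕ} (hn : 0 < n) : 0 < a n := by
  have := h.sm hn; rw [h.apply_zero] at this; exact this

/-- The dichotomy: every `r ∈ [0, ρ)` not in the sequence is either covered within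
`A*`, or satisfies a "wrap-around" relation `2 a_q = a_p + ρ + r`. -/
lemma IsStanleySeq.dichotomy (h : IsStanleySeq A a) (hP : IndepParams a lam κ) {k : ℕ}
    (hκk : κ ≤ k) {r : ℤ} (hr0 : 0 ≤ r) (hrρ : r < a (2 ^ k)) (hnr : r ∉ Set.range a) :
    (∃ p q : ℕ, p < 2 ^ k ∧ q < 2 ^ k ∧ a p < a q ∧ a q < r ∧ a p + r = 2 * a q) ∨
    (∃ p q : ℕ, p < 2 ^ k ∧ q < 2 ^ k ∧ 2 * a q = a p + a (2 ^ k) + r) := by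
  set ρ := a (2 ^ k) with hρdef
  have hρ : 0 < ρ := h.pos_of_pos (Nat.pos_of_ne_zero (by positivity))
  set M := (a (A.card - 1)).toNat with hM
  set t := M + 1 with ht
  have h3M : (M : ℤ) < 3 ^ M := by exact_mod_cast (Nat.lt_pow_self (by norm_num : 1 < 3) : M < 3 ^ M)
  have h3big : a (A.card - 1) < 3 ^ t := by
    have h1 : a (A.card - 1) ≤ (M : ℤ) := Int.self_le_toNat _
    have h2 : (3 : ℤ) ^ M < 3 ^ t := by
      rw [ht, pow_succ]; nlinarith [pow_pos (show (0:ℤ) < 3 by norm_num) M]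
    linarith
  have hρ1 : (1 : ℤ) ≤ ρ := hρ
  have haux : (3 : ℤ) ^ t ≤ 3 ^ t * ρ := le_mul_of_one_le_right (by positivity) hρ1
  have hbig : a (A.card - 1) < 3 ^ t * ρ := lt_of_lt_of_le h3big haux
  have hpow : ∀ s : ℕ, a (2 ^ (k + s)) = 3 ^ s * ρ := fun s => hP.pow hκk s
  set X := 3 ^ t * ρ + r with hX
  have hρ3t : ρ ≤ 3 ^ t * ρ := le_mul_of_one_le_left (le_of_lt hρ) (one_le_pow₀ (by norm_num))
  have hXub : X < a (2 ^ (k + t + 1)) := by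
    rw [show k + t + 1 = k + (t + 1) by ring, hpow (t + 1)]
    have : (3:ℤ) ^ (t+1) = 3 * 3 ^ t := by ring
    rw [this]; nlinarith
  have hXlb : a (2 ^ (k + t)) ≤ X := by rw [hpow t]; linarith
  have hXnr : X ∉ Set.range a := by
    rintro ⟨n, hn⟩
    have h1 : 2 ^ (k + t) ≤ n := by
      rw [← h.sm.le_iff_le]; rw [hn]; exact hXlb
    have h2 : n < 2 ^ (k + t + 1) := by
      rw [← h.sm.lt_iff_lt]; rw [hn]; exact hXub
    have hib : n - 2 ^ (k + t) < 2 ^ (k + t) := by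
      have := pow_succ 2 (k + t); omega
    have hb : a n = a (2 ^ (k + t)) + a (n - 2 ^ (k + t)) := by
      have hb' := hP.block (K := k + t) (i := n - 2 ^ (k + t)) (by omega) hib
      rw [show 2 ^ (k + t) + (n - 2 ^ (k + t)) = n from by omega] at hb'
      exact hb'
    have : a (n - 2 ^ (k + t)) = r := by rw [hpow t] at hb; rw [hn] at hb; linarith
    exact hnr ⟨n - 2 ^ (k + t), this⟩
  obtain ⟨p', q', hpq', hqX, heq⟩ := h.cover hXnr (by linarith : a (A.card - 1) < X)
  have hq'lt : q' < 2 ^ (k + t + 1) := by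
    rw [← h.sm.lt_iff_lt]; exact hqX.trans hXub
  have ha2k : ∀ i : ℕ, i < 2 ^ k → a i < ρ := fun i hi => h.sm hi
  by_cases hcase : 2 ^ (k + t) ≤ q'
  · -- the middle term of the cover lies in the top block
    set qq := q' - 2 ^ (k + t) with hqq
    have hqqlt : qq < 2 ^ (k + t) := by
      have := pow_succ 2 (k + t); omega
    have haq : a q' = 3 ^ t * ρ + a qq := by
      have hb := hP.block (K := k + t) (i := qq) (by omega) hqqlt
      rw [show 2 ^ (k + t) + qq = q' from by omega, hpow t] at hb
      exact hb
    have haqq_r : a qq < r := by rw [haq] at hqX; linarith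
    have hqq2k : qq < 2 ^ k := by
      rw [← h.sm.lt_iff_lt]; exact haqq_r.trans hrρ
    have hap' : a p' = 3 ^ t * ρ + (2 * a qq - r) := by
      rw [haq] at heq; linarith
    by_cases h2 : 0 ≤ 2 * a qq - r
    · -- type 0
      have hp'ge : 2 ^ (k + t) ≤ p' := by
        rw [← h.sm.le_iff_le, hpow t]; linarith
      set pp := p' - 2 ^ (k + t) with hpp
      have hpplt : pp < 2 ^ (k + t) := by
        have hlt : p' < q' := h.sm.lt_iff_lt.1 hpq'
        omega
      have hap : a p' = 3 ^ t * ρ + a pp := by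
        have hb := hP.block (K := k + t) (i := pp) (by omega) hpplt
        rw [show 2 ^ (k + t) + pp = p' from by omega, hpow t] at hb
        exact hb
      have happ : a pp = 2 * a qq - r := by rw [hap] at hap'; linarith
      have happq : a pp < a qq := by rw [hap, haq] at hpq'; linarith
      have hpp2k : pp < 2 ^ k := by
        rw [← h.sm.lt_iff_lt]; exact happq.trans (haqq_r.trans hrρ)
      exact Or.inl ⟨pp, qq, hpp2k, hqq2k, happq, haqq_r, by omega⟩
    · -- impossible: a p' would fall in the empty zone just below 3^t·ρ
      exfalso
      push_neg at h2
      have hp'lt : p' < 2 ^ (k + t) := by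
        rw [← h.sm.lt_iff_lt, hpow t]; linarith
      have hple : a p' ≤ a (2 ^ (k + t) - 1) := h.sm.monotone (by omega)
      have hlam1 := hP.lam_eq (K := k + t) (by omega)
      have hlam2 := hP.lam_eq (K := k) hκk
      have hmax : a (2 ^ k - 1) ≤ ρ - 1 := by
        have : a (2 ^ k - 1) < a (2 ^ k) := h.sm (by have := Nat.one_le_two_pow (n := k); omega)
        omega
      have hlamle : lam ≤ ρ - 1 := by omega
      have h3t3 : (3 : ℤ) * ρ ≤ 3 ^ t * ρ := by
        have h31 : (3 : ℤ) ≤ 3 ^ t := by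
          calc (3 : ℤ) = 3 ^ 1 := (pow_one 3).symm
          _ ≤ 3 ^ t := pow_le_pow_right₀ (by norm_num) (by omega)
        exact mul_le_mul_of_nonneg_right h31 (le_of_lt hρ)
      rw [hpow t] at hlam1
      have haqq0 : 0 ≤ a qq := h.nonneg qq
      linarith
  · -- both cover elements below 3^t·ρ : wrap-around relation
    push_neg at hcase
    have hp'lt : p' < q' := h.sm.lt_iff_lt.1 hpq'
    obtain ⟨eq', iq, hiq, heq0, heqbd, hqdec⟩ := hP.decomp hκk t q' hcase
    obtain ⟨ep', ip, hip, hep0, hepbd, hpdec⟩ := hP.decomp hκk t p' (by omega)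
    set d : ℤ := 2 * eq' - ep' - 3 ^ t with hd
    have hdeq : ρ * d = a ip + r - 2 * a iq := by
      rw [hqdec, hpdec] at heq
      rw [hd, hρdef]
      rw [hX] at heq
      linear_combination -heq
    have haip := ha2k ip hip
    have haiq := ha2k iq hiq
    have haip0 := h.nonneg ip
    have haiq0 := h.nonneg iq
    have hrhs1 : ρ * d < ρ * 2 := by rw [hdeq]; linarith
    have hrhs2 : ρ * (-2) < ρ * d := by rw [hdeq]; linarith
    have hdlt : d < 2 := (mul_lt_mul_iff_right₀ hρ).1 hrhs1
    have hdgt : -2 < d := (mul_lt_mul_iff_right₀ hρ).1 hrhs2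
    have hdle : d ≤ -1 := by
      have : 2 * eq' ≤ 3 ^ t - 1 := heqbd
      omega
    have hdm1 : d = -1 := by omega
    rw [hdm1] at hdeq
    exact Or.inr ⟨ip, iq, hip, hiq, by linarith⟩

end IndepLemmas
/-- The candidate Stanley sequence of `A* ⊗ₖ B`. -/
noncomputable def tensorSeq (a b : ℕ → ℤ) (k : ℕ) : ℕ → ℤ :=
  fun n => a (2 ^ k) * b (n / 2 ^ k) + a (n % 2 ^ k)

section Tensor

variable {A B : Finset ℤ} {a b : ℕ → ℤ} {k : ℕ}

lemma tensorSeq_apply (a b : ℕ → ℤ) (k : ℕ) (q r : ℕ) (hr : r < 2 ^ k) :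
    tensorSeq a b k (2 ^ k * q + r) = a (2 ^ k) * b q + a r := by
  have h2k : 0 < 2 ^ k := Nat.pow_pos (by norm_num : 0 < 2)
  unfold tensorSeq
  rw [Nat.mul_add_div h2k, Nat.mul_add_mod, Nat.div_eq_of_lt hr, Nat.mod_eq_of_lt hr, add_zero]

lemma IsStanleySeq.rho_pos (hA : IsStanleySeq A a) : 0 < a (2 ^ k) :=
  hA.pos_of_pos (Nat.pow_pos (by norm_num : 0 < 2))

lemma tensorSeq_strictMono (hA : IsStanleySeq A a) (hB : IsStanleySeq B b) (k : ℕ) :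
    StrictMono (tensorSeq a b k) := by
  intro m n hmn
  have h2k : 0 < 2 ^ k := Nat.pow_pos (by norm_num : 0 < 2)
  have hρ : 0 < a (2 ^ k) := hA.rho_pos
  have hdm := Nat.div_add_mod m (2 ^ k)
  have hdn := Nat.div_add_mod n (2 ^ k)
  have hmodm : m % 2 ^ k < 2 ^ k := Nat.mod_lt _ h2k
  have hmodn : n % 2 ^ k < 2 ^ k := Nat.mod_lt _ h2k
  have haρm : a (m % 2 ^ k) < a (2 ^ k) := hA.sm hmodm
  have h0n : 0 ≤ a (n % 2 ^ k) := hA.nonneg _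
  have hjm : m / 2 ^ k ≤ n / 2 ^ k := Nat.div_le_div_right hmn.le
  unfold tensorSeq
  rcases lt_or_eq_of_le hjm with hlt | heq
  · have hb1 : b (m / 2 ^ k) + 1 ≤ b (n / 2 ^ k) := Int.add_one_le_iff.2 (hB.sm hlt)
    have := mul_le_mul_of_nonneg_left hb1 hρ.le
    nlinarith
  · have hdm' := hdm
    rw [heq] at hdm'
    have hmod : m % 2 ^ k < n % 2 ^ k := by omega
    rw [heq]
    have := hA.sm hmod
    linarith

lemma tensorSeq_mem_range (a b : ℕ → ℤ) (k : ℕ) {p : ℕ} (hp : p < 2 ^ k) (w : ℕ) :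
    a (2 ^ k) * b w + a p ∈ Set.range (tensorSeq a b k) :=
  ⟨2 ^ k * w + p, tensorSeq_apply a b k w p hp⟩

lemma tensorSeq_threeFree (hA : IsStanleySeq A a) (hB : IsStanleySeq B b)
    {lamA : ℤ} {κA : ℕ} (hPA : IndepParams a lamA κA) (hκa : κA ≤ k) :
    ThreeFreeSet (Set.range (tensorSeq a b k)) := by
  rintro x ⟨n1, rfl⟩ y ⟨n2, rfl⟩ z ⟨n3, rfl⟩ h1 h2 heq
  have h2k : 0 < 2 ^ k := Nat.pow_pos (by norm_num : 0 < 2)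
  have hρ : 0 < a (2 ^ k) := hA.rho_pos
  set ρ := a (2 ^ k) with hρdef
  set β₁ := b (n1 / 2 ^ k) with hb1
  set β₂ := b (n2 / 2 ^ k) with hb2
  set β₃ := b (n3 / 2 ^ k) with hb3
  set α₁ := a (n1 % 2 ^ k) with ha1
  set α₂ := a (n2 % 2 ^ k) with ha2
  set α₃ := a (n3 % 2 ^ k) with ha3
  have hv1 : tensorSeq a b k n1 = ρ * β₁ + α₁ := rfl
  have hv2 : tensorSeq a b k n2 = ρ * β₂ + α₂ := rfl
  have hv3 : tensorSeq a b k n3 = ρ * β₃ + α₃ := rfl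
  simp only [hv1, hv2, hv3] at h1 h2 heq
  have hα : ∀ i : ℕ, 0 ≤ a (i % 2 ^ k) ∧ a (i % 2 ^ k) < ρ :=
    fun i => ⟨hA.nonneg _, hA.sm (Nat.mod_lt _ h2k)⟩
  obtain ⟨hα₁0, hα₁ρ⟩ := hα n1
  obtain ⟨hα₂0, hα₂ρ⟩ := hα n2
  obtain ⟨hα₃0, hα₃ρ⟩ := hα n3
  have hβ12 : β₁ ≤ β₂ := by
    by_contra hc
    push_neg at hc
    have h' : β₂ + 1 ≤ β₁ := Int.add_one_le_iff.2 hc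
    have := mul_le_mul_of_nonneg_left h' hρ.le
    linarith
  have hβ23 : β₂ ≤ β₃ := by
    by_contra hc
    push_neg at hc
    have h' : β₃ + 1 ≤ β₂ := Int.add_one_le_iff.2 hc
    have := mul_le_mul_of_nonneg_left h' hρ.le
    linarith
  set D : ℤ := β₁ + β₃ - 2 * β₂ with hD
  have hDeq : ρ * D = 2 * α₂ - α₁ - α₃ := by rw [hD]; linear_combination heq
  have hD1 : ρ * D < ρ * 2 := by rw [hDeq]; linarith
  have hD2 : ρ * (-2) < ρ * D := by rw [hDeq]; linarith
  have hDlt : D < 2 := (mul_lt_mul_iff_right₀ hρ).1 hD1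
  have hDgt : -2 < D := (mul_lt_mul_iff_right₀ hρ).1 hD2
  have hblock : ∀ i : ℕ, a (2 ^ k + i % 2 ^ k) = ρ + a (i % 2 ^ k) :=
    fun i => hPA.block hκa (Nat.mod_lt _ h2k)
  interval_cases D
  · -- D = -1
    have hkey : 2 * α₂ - α₁ - α₃ = -ρ := by linarith [hDeq]
    refine hA.range_threeFree α₁ ⟨n1 % 2 ^ k, rfl⟩ (ρ + α₂) ?_ (ρ + α₃) ?_ ?_ ?_ ?_
    · exact ⟨2 ^ k + n2 % 2 ^ k, hblock n2⟩
    · exact ⟨2 ^ k + n3 % 2 ^ k, hblock n3⟩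
    · linarith
    · linarith
    · linarith
  · -- D = 0
    have hsum : 2 * α₂ = α₁ + α₃ := by linarith [hDeq]
    have hbsum : β₁ + β₃ = 2 * β₂ := by linarith [hD]
    rcases lt_or_eq_of_le hβ12 with hlt | heqb
    · have hb23 : β₂ < β₃ := by omega
      exact hB.range_threeFree β₁ ⟨n1 / 2 ^ k, rfl⟩ β₂ ⟨n2 / 2 ^ k, rfl⟩ β₃ ⟨n3 / 2 ^ k, rfl⟩
        hlt hb23 (by linarith)
    · have hb13 : β₃ = β₂ := by omega
      have hα12 : α₁ < α₂ := by rw [← heqb] at h1; linarith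
      have hα23 : α₂ < α₃ := by rw [hb13] at h2; linarith
      exact hA.range_threeFree α₁ ⟨n1 % 2 ^ k, rfl⟩ α₂ ⟨n2 % 2 ^ k, rfl⟩ α₃ ⟨n3 % 2 ^ k, rfl⟩
        hα12 hα23 (by linarith)
  · -- D = 1
    have hkey : 2 * α₂ - α₁ - α₃ = ρ := by linarith [hDeq]
    refine hA.range_threeFree α₁ ⟨n1 % 2 ^ k, rfl⟩ α₂ ⟨n2 % 2 ^ k, rfl⟩ (ρ + α₃)
      ⟨2 ^ k + n3 % 2 ^ k, hblock n3⟩ ?_ ?_ ?_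
    · linarith
    · linarith
    · linarith

end Tensor
section Cover

variable {A B : Finset ℤ} {a b : ℕ → ℤ} {k : ℕ} {lamA lamB : ℤ} {κA κB : ℕ}

/-- Every integer above the maximum of the seed `A* ⊗ₖ B` which is not in the tensor
sequence is covered by two smaller elements of the tensor sequence. -/
lemma tensorSeq_cover (hA : IsStanleySeq A a) (hB : IsStanleySeq B b)
    (hPA : IndepParams a lamA κA) (hκa : κA ≤ k)
    {m : ℤ} (hm : tensorSeq a b k (2 ^ k * B.card - 1) < m)
    (hnr : m ∉ Set.range (tensorSeq a b k)) :
    ∃ u v : ℕ, tensorSeq a b k u < tensorSeq a b k v ∧ tensorSeq a b k v < m ∧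
      tensorSeq a b k u + m = 2 * tensorSeq a b k v := by
  classical
  have h2k : 0 < 2 ^ k := Nat.pow_pos (by norm_num : 0 < 2)
  have hρ : 0 < a (2 ^ k) := hA.rho_pos
  set ρ := a (2 ^ k) with hρdef
  set K1 := a (2 ^ k - 1) with hK1def
  set B1 := b (B.card - 1) with hB1def
  have hBpos : 0 < B.card := hB.card_pos
  have hidx : 2 ^ k * B.card - 1 = 2 ^ k * (B.card - 1) + (2 ^ k - 1) := by
    obtain ⟨n, hn⟩ : ∃ n, B.card = n + 1 := ⟨B.card - 1, by omega⟩
    rw [hn]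
    simp only [Nat.add_sub_cancel]
    have e : 2 ^ k * (n + 1) = 2 ^ k * n + 2 ^ k := by ring
    omega
  have hc1 : tensorSeq a b k (2 ^ k * B.card - 1) = ρ * B1 + K1 := by
    rw [hidx]; exact tensorSeq_apply a b k _ _ (by omega)
  rw [hc1] at hm
  have hK1ρ : K1 < ρ := hA.sm (by omega)
  have hK10 : 0 ≤ K1 := hA.nonneg _
  set s := m / ρ with hsdef
  set r := m % ρ with hrdef
  have hr0 : 0 ≤ r := Int.emod_nonneg m (ne_of_gt hρ)
  have hrρ : r < ρ := Int.emod_lt_of_pos m hρ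
  have hmeq : ρ * s + r = m := Int.mul_ediv_add_emod m ρ
  have hsB1 : B1 ≤ s := by
    by_contra hc
    push_neg at hc
    have h1 : s + 1 ≤ B1 := Int.add_one_le_iff.2 hc
    have := mul_le_mul_of_nonneg_left h1 hρ.le
    linarith
  by_cases hrA : ∃ i, i < 2 ^ k ∧ a i = r
  · obtain ⟨i, hi2k, hai⟩ := hrA
    by_cases hsb : ∃ w, b w = s
    · -- m would be in the sequence: contradiction
      obtain ⟨w, hw⟩ := hsb
      exact absurd ⟨2 ^ k * w + i, by rw [tensorSeq_apply a b k w i hi2k, hw, hai]; linarith⟩ hnr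
    · -- cover transferred from the B side
      push_neg at hsb
      have hsnr : s ∉ Set.range b := by rintro ⟨w, hw⟩; exact hsb w hw
      have hsgt : B1 < s := lt_of_le_of_ne hsB1 (fun hh => hsb (B.card - 1) hh)
      obtain ⟨u, v, huv, hvs, hcov⟩ := hB.cover hsnr hsgt
      have hyv : tensorSeq a b k (2 ^ k * u + i) = ρ * b u + a i := tensorSeq_apply a b k u i hi2k
      have hzv : tensorSeq a b k (2 ^ k * v + i) = ρ * b v + a i := tensorSeq_apply a b k v i hi2k
      refine ⟨2 ^ k * u + i, 2 ^ k * v + i, ?_, ?_, ?_⟩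
      · rw [hyv, hzv]
        have := mul_lt_mul_of_pos_left huv hρ
        linarith
      · rw [hzv, hai]
        have := mul_lt_mul_of_pos_left hvs hρ
        linarith
      · rw [hyv, hzv, hai]
        linear_combination ρ * hcov - hmeq
  · push_neg at hrA
    have hnra : r ∉ Set.range a := by
      rintro ⟨i, hi⟩
      have hi2k : i < 2 ^ k := by rw [← hA.sm.lt_iff_lt]; rw [hi]; exact hrρ
      exact hrA i hi2k hi
    rcases hA.dichotomy hPA hκa hr0 hrρ hnra with
      ⟨p, q, hp, hq, hpq, hqr, h0eq⟩ | ⟨p, q, hp, hq, h2eq⟩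
    · -- type 0 : r is covered within A*
      have hap0 : 0 ≤ a p := hA.nonneg p
      have haqρ : a q < ρ := hA.sm hq
      have hapρ : a p < ρ := hA.sm hp
      by_cases hsb : ∃ w, b w = s
      · obtain ⟨w, hw⟩ := hsb
        have hyv : tensorSeq a b k (2 ^ k * w + p) = ρ * b w + a p := tensorSeq_apply a b k w p hp
        have hzv : tensorSeq a b k (2 ^ k * w + q) = ρ * b w + a q := tensorSeq_apply a b k w q hq
        refine ⟨2 ^ k * w + p, 2 ^ k * w + q, ?_, ?_, ?_⟩
        · rw [hyv, hzv]; linarith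
        · rw [hzv, hw]; linarith
        · rw [hyv, hzv, hw]; linear_combination h0eq - hmeq
      · push_neg at hsb
        have hsnr : s ∉ Set.range b := by rintro ⟨w, hw⟩; exact hsb w hw
        have hsgt : B1 < s := lt_of_le_of_ne hsB1 (fun hh => hsb (B.card - 1) hh)
        obtain ⟨u, v, huv, hvs, hcov⟩ := hB.cover hsnr hsgt
        have huv1 : b u + 1 ≤ b v := Int.add_one_le_iff.2 huv
        have hvs1 : b v + 1 ≤ s := Int.add_one_le_iff.2 hvs
        have e1 := mul_le_mul_of_nonneg_left huv1 hρ.le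
        have e2 := mul_le_mul_of_nonneg_left hvs1 hρ.le
        have hyv : tensorSeq a b k (2 ^ k * u + p) = ρ * b u + a p := tensorSeq_apply a b k u p hp
        have hzv : tensorSeq a b k (2 ^ k * v + q) = ρ * b v + a q := tensorSeq_apply a b k v q hq
        refine ⟨2 ^ k * u + p, 2 ^ k * v + q, ?_, ?_, ?_⟩
        · rw [hyv, hzv]
          have hrr : ρ * (b u + 1) = ρ * b u + ρ := by ring
          linarith
        · rw [hzv]
          have hrr : ρ * (b v + 1) = ρ * b v + ρ := by ring
          linarith
        · rw [hyv, hzv]; linear_combination ρ * hcov - hmeq + h0eq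
    · -- type 2 : wrap-around relation 2 a_q = a_p + ρ + r
      have hap0 : 0 ≤ a p := hA.nonneg p
      have haqρ : a q < ρ := hA.sm hq
      have hapρ : a p < ρ := hA.sm hp
      have haqK1 : a q ≤ K1 := hA.sm.monotone (by omega)
      have hrK1 : r < K1 := by linarith
      have hsgt : B1 < s := by
        rcases lt_or_eq_of_le hsB1 with h' | h'
        · exact h'
        · exfalso; rw [← h'] at hmeq; linarith
      have hapq : a p < a q := by linarith
      -- find the B-side pair with b U + s = 2 b V + 1
      have hpair : ∃ U V : ℕ, b U + s = 2 * b V + 1 ∧ b V ≤ s - 1 := by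
        by_cases hs1 : ∃ w, b w = s - 1
        · obtain ⟨w, hw⟩ := hs1
          exact ⟨w, w, by rw [hw]; ring, by rw [hw]⟩
        · push_neg at hs1
          have hs1nr : s - 1 ∉ Set.range b := by rintro ⟨w, hw⟩; exact hs1 w hw
          have hs1gt : B1 < s - 1 :=
            lt_of_le_of_ne (by omega) (fun hh => hs1 (B.card - 1) hh)
          obtain ⟨u, v, huv, hvs, hcov⟩ := hB.cover hs1nr hs1gt
          exact ⟨u, v, by omega, by omega⟩
      obtain ⟨U, V, hrel, hVle⟩ := hpair
      have hUled : b U ≤ b V := by omega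
      have e2 := mul_le_mul_of_nonneg_left hVle hρ.le
      have hyv : tensorSeq a b k (2 ^ k * U + p) = ρ * b U + a p := tensorSeq_apply a b k U p hp
      have hzv : tensorSeq a b k (2 ^ k * V + q) = ρ * b V + a q := tensorSeq_apply a b k V q hq
      refine ⟨2 ^ k * U + p, 2 ^ k * V + q, ?_, ?_, ?_⟩
      · rw [hyv, hzv]
        rcases lt_or_eq_of_le hUled with hlt | heqb
        · have h1' : b U + 1 ≤ b V := Int.add_one_le_iff.2 hlt
          have := mul_le_mul_of_nonneg_left h1' hρ.le
          have hrr : ρ * (b U + 1) = ρ * b U + ρ := by ring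
          linarith
        · rw [heqb]; linarith
      · rw [hzv]
        have hrr : ρ * (s - 1) = ρ * s - ρ := by ring
        linarith
      · rw [hyv, hzv]; linear_combination ρ * hrel - hmeq - h2eq

end Cover
section Main

variable {A B : Finset ℤ} {a b : ℕ → ℤ} {k : ℕ} {lamA lamB : ℤ} {κA κB : ℕ}

lemma strictMono_enum_le {f g : ℕ → ℤ} (hf : StrictMono f) (hg : StrictMono g) {N : ℕ}
    (h : (Finset.range N).image f = (Finset.range N).image g) {i : ℕ} (hi : i < N) :
    f i ≤ g i := by
  by_contra hc
  push_neg at hc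
  have hsub : (Finset.range (i + 1)).image g ⊆ (Finset.range i).image f := by
    intro x hx
    obtain ⟨j, hj, rfl⟩ := Finset.mem_image.1 hx
    have hji : j ≤ i := by have := Finset.mem_range.1 hj; omega
    have hmem : g j ∈ (Finset.range N).image f := by
      rw [h]; exact Finset.mem_image_of_mem g (Finset.mem_range.2 (by omega))
    obtain ⟨j', hj', hjeq⟩ := Finset.mem_image.1 hmem
    have hlt : f j' < f i := by rw [hjeq]; exact lt_of_le_of_lt (hg.monotone hji) hc
    exact Finset.mem_image.2 ⟨j', Finset.mem_range.2 (hf.lt_iff_lt.1 hlt), hjeq⟩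
  have c1 : ((Finset.range (i + 1)).image g).card = i + 1 := by
    rw [Finset.card_image_of_injective _ hg.injective, Finset.card_range]
  have c2 : ((Finset.range i).image f).card = i := by
    rw [Finset.card_image_of_injective _ hf.injective, Finset.card_range]
  have := Finset.card_le_card hsub
  omega

lemma tensor_eq (hA : IsStanleySeq A a) (hB : IsStanleySeq B b)
    (hPA : IndepParams a lamA κA) (hκa : κA ≤ k)
    {AB : Finset ℤ}
    (hAB : AB = (Finset.range (2 ^ k) ×ˢ B).image fun p => a (2 ^ k) * p.2 + a p.1)
    {ab : ℕ → ℤ} (hab : IsStanleySeq AB ab) :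
    ∀ n, ab n = tensorSeq a b k n := by
  classical
  have h2k : 0 < 2 ^ k := Nat.pow_pos (by norm_num : 0 < 2)
  have hρ : 0 < a (2 ^ k) := hA.rho_pos
  have hcsm : StrictMono (tensorSeq a b k) := tensorSeq_strictMono hA hB k
  have cardAB : AB.card = 2 ^ k * B.card := by
    rw [hAB, Finset.card_image_of_injOn, Finset.card_product, Finset.card_range]
    intro p₁ hp₁ p₂ hp₂ heq
    simp only [Finset.coe_product, Set.mem_prod, Finset.mem_coe, Finset.mem_range] at hp₁ hp₂
    simp only at heq
    have h₁ρ : a p₁.1 < a (2 ^ k) := hA.sm hp₁.1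
    have h₂ρ : a p₂.1 < a (2 ^ k) := hA.sm hp₂.1
    have h₁0 : 0 ≤ a p₁.1 := hA.nonneg _
    have h₂0 : 0 ≤ a p₂.1 := hA.nonneg _
    have hd : a (2 ^ k) * (p₂.2 - p₁.2) = a p₁.1 - a p₂.1 := by linear_combination -heq
    have hb1 : a (2 ^ k) * (p₂.2 - p₁.2) < a (2 ^ k) * 1 := by rw [hd]; linarith
    have hb2 : a (2 ^ k) * (-1) < a (2 ^ k) * (p₂.2 - p₁.2) := by rw [hd]; linarith
    have hz : p₂.2 - p₁.2 = 0 := by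
      have l1 := (mul_lt_mul_iff_right₀ hρ).1 hb1
      have l2 := (mul_lt_mul_iff_right₀ hρ).1 hb2
      omega
    have h2 : p₁.2 = p₂.2 := by omega
    have h1 : p₁.1 = p₂.1 := by
      apply hA.sm.injective
      have : a p₁.1 = a p₂.1 := by rw [h2] at heq; linarith
      exact this
    exact Prod.ext h1 h2
  have himgc : (Finset.range (2 ^ k * B.card)).image (tensorSeq a b k) = AB := by
    apply Finset.eq_of_subset_of_card_le
    · intro x hx
      obtain ⟨n, hn, rfl⟩ := Finset.mem_image.1 hx
      have hn' := Finset.mem_range.1 hn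
      have hdiv : n / 2 ^ k < B.card := (Nat.div_lt_iff_lt_mul h2k).2 (by rw [mul_comm]; exact hn')
      rw [hAB]
      exact Finset.mem_image.2 ⟨(n % 2 ^ k, b (n / 2 ^ k)),
        Finset.mem_product.2 ⟨Finset.mem_range.2 (Nat.mod_lt _ h2k), hB.mem_seed _ hdiv⟩, rfl⟩
    · rw [Finset.card_image_of_injective _ hcsm.injective, Finset.card_range, cardAB]
  have himgab : (Finset.range (2 ^ k * B.card)).image ab = AB := by
    apply Finset.eq_of_subset_of_card_le
    · intro x hx
      obtain ⟨n, hn, rfl⟩ := Finset.mem_image.1 hx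
      exact hab.mem_seed n (by rw [cardAB]; exact Finset.mem_range.1 hn)
    · rw [Finset.card_image_of_injective _ hab.sm.injective, Finset.card_range, cardAB]
  have base : ∀ i, i < 2 ^ k * B.card → ab i = tensorSeq a b k i := fun i hi =>
    le_antisymm (strictMono_enum_le hab.sm hcsm (himgab.trans himgc.symm) hi)
      (strictMono_enum_le hcsm hab.sm (himgc.trans himgab.symm) hi)
  intro n
  induction n using Nat.strong_induction_on with
  | _ n ih =>
    by_cases hn : n < 2 ^ k * B.card
    · exact base n hn
    · push_neg at hn
      have hNpos : 0 < 2 ^ k * B.card := Nat.mul_pos h2k hB.card_pos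
      have hcard' : AB.card ≤ n := by omega
      have hprefix : ab '' Set.Iio n = tensorSeq a b k '' Set.Iio n :=
        Set.image_congr (fun j hj => ih j hj)
      have hn1 : ab (n - 1) = tensorSeq a b k (n - 1) := ih (n - 1) (by omega)
      have hLab := hab.isLeast n hcard'
      rw [hprefix, hn1] at hLab
      have hLc : IsLeast {m : ℤ | tensorSeq a b k (n - 1) < m ∧
          ThreeFreeSet (tensorSeq a b k '' Set.Iio n ∪ {m})} (tensorSeq a b k n) := by
        constructor
        · refine ⟨hcsm (show n - 1 < n by omega), ?_⟩
          apply (tensorSeq_threeFree hA hB hPA hκa).mono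
          intro x hx
          rcases hx with ⟨j, _, rfl⟩ | hx
          · exact ⟨j, rfl⟩
          · rw [Set.mem_singleton_iff.1 hx]; exact ⟨n, rfl⟩
        · rintro m ⟨hm1, hm2⟩
          by_contra hc
          push_neg at hc
          have hmgt : tensorSeq a b k (2 ^ k * B.card - 1) < m :=
            lt_of_le_of_lt (hcsm.monotone (by omega : 2 ^ k * B.card - 1 ≤ n - 1)) hm1
          have hmnr : m ∉ Set.range (tensorSeq a b k) := by
            rintro ⟨j, rfl⟩
            have l1 : n - 1 < j := hcsm.lt_iff_lt.1 hm1
            have l2 : j < n := hcsm.lt_iff_lt.1 hc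
            omega
          obtain ⟨u, v, h1, h2, h3⟩ := tensorSeq_cover hA hB hPA hκa hmgt hmnr
          have hvn : v < n := hcsm.lt_iff_lt.1 (h2.trans hc)
          have hun : u < n := hcsm.lt_iff_lt.1 ((h1.trans h2).trans hc)
          exact hm2 _ (Or.inl ⟨u, hun, rfl⟩) _ (Or.inl ⟨v, hvn, rfl⟩) _ (Or.inr rfl) h1 h2 h3
      exact hLab.unique hLc

end Main
section Assemble

variable {A B : Finset ℤ} {a b : ℕ → ℤ} {k : ℕ} {lamA lamB : ℤ} {κA κB : ℕ}

lemma tensor_indepParams (hA : IsStanleySeq A a) (hB : IsStanleySeq B b)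
    (hPA : IndepParams a lamA κA) (hPB : IndepParams b lamB κB) (hκa : κA ≤ k) :
    IndepParams (tensorSeq a b k) (a (2 ^ k) * lamB + lamA) (k + κB) := by
  intro K hK
  have h2k : 0 < 2 ^ k := Nat.pow_pos (by norm_num : 0 < 2)
  have hKk : k ≤ K := by omega
  have hsplit : 2 ^ k * 2 ^ (K - k) = 2 ^ K := by rw [← pow_add]; congr 1; omega
  have hv2K : tensorSeq a b k (2 ^ K) = a (2 ^ k) * b (2 ^ (K - k)) := by
    have hap := tensorSeq_apply a b k (2 ^ (K - k)) 0 h2k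
    rw [add_zero, hsplit, hA.apply_zero, add_zero] at hap
    exact hap
  constructor
  · intro i hi
    have hidiv : i / 2 ^ k < 2 ^ (K - k) := by
      apply (Nat.div_lt_iff_lt_mul h2k).2
      rw [mul_comm, hsplit]; exact hi
    have e1 : 2 ^ K + i = 2 ^ k * (2 ^ (K - k) + i / 2 ^ k) + i % 2 ^ k := by
      have hdm := Nat.div_add_mod i (2 ^ k)
      have e : 2 ^ k * (2 ^ (K - k) + i / 2 ^ k) = 2 ^ k * 2 ^ (K - k) + 2 ^ k * (i / 2 ^ k) :=
        Nat.mul_add _ _ _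
      omega
    have hmod : i % 2 ^ k < 2 ^ k := Nat.mod_lt _ h2k
    rw [e1, tensorSeq_apply a b k _ _ hmod, hv2K]
    have hbb : b (2 ^ (K - k) + i / 2 ^ k) = b (2 ^ (K - k)) + b (i / 2 ^ k) :=
      hPB.block (by omega) hidiv
    have hvi : tensorSeq a b k i = a (2 ^ k) * b (i / 2 ^ k) + a (i % 2 ^ k) := rfl
    rw [hbb, hvi]; ring
  · have hT1 : (1 : ℕ) ≤ 2 ^ (K - k) := Nat.one_le_two_pow
    have e3 : 2 ^ K - 1 = 2 ^ k * (2 ^ (K - k) - 1) + (2 ^ k - 1) := by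
      have e' : 2 ^ k * (2 ^ (K - k) - 1) + 2 ^ k = 2 ^ k * 2 ^ (K - k) := by
        rw [← Nat.mul_succ]; congr 1; omega
      omega
    rw [e3, tensorSeq_apply a b k _ _ (by omega), hv2K]
    have hbb := hPB.lam_eq (K := K - k) (by omega)
    have haa := hPA.lam_eq (K := k) hκa
    linear_combination a (2 ^ k) * hbb + haa

lemma ratio_const {f : ℕ → ℤ} {lam : ℤ} {κ : ℕ} (hP : IndepParams f lam κ) {K : ℕ}
    (hK : κ ≤ K) : (f (2 ^ K) : ℚ) / 3 ^ K = (f (2 ^ κ) : ℚ) / 3 ^ κ := by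
  obtain ⟨t, rfl⟩ : ∃ t, K = κ + t := ⟨K - κ, by omega⟩
  rw [hP.pow le_rfl t]
  push_cast
  rw [pow_add]
  have h3 : (3 : ℚ) ^ κ ≠ 0 := by positivity
  have h3t : (3 : ℚ) ^ t ≠ 0 := by positivity
  field_simp

end Assemble
/-- the scaling factor of the independent Stanley sequence
S(A ⊗_k B) is the product α(A)·α(B). -/
theorem product_scaling_factor (A B : Finset ℤ) (a b : ℕ → ℤ)
    (hA : IsStanleySeq A a) (hB : IsStanleySeq B b)
    (hIndA : Independent a) (hIndB : Independent b)
    (k : ℕ) (hk : kappa a ≤ k)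
    (AB : Finset ℤ)
    (hAB : AB = (Finset.range (2 ^ k) ×ˢ B).image fun p => a (2 ^ k) * p.2 + a p.1) :
    ∀ ab : ℕ → ℤ, IsStanleySeq AB ab →
      Independent ab ∧ scalingFactor ab = scalingFactor a * scalingFactor b := by
  intro ab hab
  obtain ⟨lA0, kA0, hA0⟩ := hIndA
  obtain ⟨lB0, kB0, hB0⟩ := hIndB
  obtain ⟨lamA', hPA⟩ : ∃ lam, IndepParams a lam (kappa a) :=
    Nat.sInf_mem (⟨kA0, lA0, hA0⟩ : {κ | ∃ lam, IndepParams a lam κ}.Nonempty)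
  obtain ⟨lamB', hPB⟩ : ∃ lam, IndepParams b lam (kappa b) :=
    Nat.sInf_mem (⟨kB0, lB0, hB0⟩ : {κ | ∃ lam, IndepParams b lam κ}.Nonempty)
  have habf : ab = tensorSeq a b k := funext (tensor_eq hA hB hPA hk hAB hab)
  have hPC0 : IndepParams (tensorSeq a b k) (a (2 ^ k) * lamB' + lamA') (k + kappa b) :=
    tensor_indepParams hA hB hPA hPB hk
  constructor
  · rw [habf]
    exact ⟨_, _, hPC0⟩
  · rw [habf]
    obtain ⟨lamC, hPC⟩ : ∃ lam, IndepParams (tensorSeq a b k) lam (kappa (tensorSeq a b k)) :=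
      Nat.sInf_mem (⟨k + kappa b, _, hPC0⟩ :
        {κ | ∃ lam, IndepParams (tensorSeq a b k) lam κ}.Nonempty)
    have h2k : 0 < 2 ^ k := Nat.pow_pos (by norm_num : 0 < 2)
    set K0 := max (kappa (tensorSeq a b k)) (k + kappa b) with hK0
    have hK0k : k ≤ K0 := le_trans (by omega) (le_max_right _ _)
    have hK0b : kappa b ≤ K0 - k := by
      have := le_max_right (kappa (tensorSeq a b k)) (k + kappa b); omega
    have h1 : scalingFactor (tensorSeq a b k) = (tensorSeq a b k (2 ^ K0) : ℚ) / 3 ^ K0 :=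
      (ratio_const hPC (le_max_left _ _)).symm
    have hc2K0 : tensorSeq a b k (2 ^ K0) = a (2 ^ k) * b (2 ^ (K0 - k)) := by
      have hsplit : 2 ^ k * 2 ^ (K0 - k) = 2 ^ K0 := by rw [← pow_add]; congr 1; omega
      have hap := tensorSeq_apply a b k (2 ^ (K0 - k)) 0 h2k
      rw [add_zero, hsplit, hA.apply_zero, add_zero] at hap
      exact hap
    rw [h1, hc2K0]
    unfold scalingFactor
    rw [← ratio_const hPA hk, ← ratio_const hPB hK0b]
    push_cast
    rw [show K0 = k + (K0 - k) by omega, pow_add]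
    have h3a : (3 : ℚ) ^ k ≠ 0 := by positivity
    have h3b : (3 : ℚ) ^ (K0 - k) ≠ 0 := by positivity
    field_simp
    rw [Nat.add_sub_cancel_left]
end
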